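/- With the switch function $w_T$ as above, its derivative satisfies $\frac{\partial w_T}{\partial p_0}(p_0) = w_T(p_0)\, A(p_0)$, where $A(p_0) = \frac{g'(p_0)}{g(p_0)} - \frac{1}{1 - p(T;p_0)} e^{\int_0^T f'(p(s))ds} + \int_0^T f''(p(s))\, e^{\int_0^s f'(p(\sigma))d\sigma}\, ds$. In particular, $\partial_{p_0} w_T$ and $A$ have opposite signs pointwise (since $w_T < 0$). -/

import Mathlib

open Set

private lemma mvt_bound {h h' : ℝ → ℝ} {s : Set ℝ} (hs : Convex ℝ s)
    (hd : ∀ x ∈ s, HasDerivAt h (h' x) x) {C : ℝ} (hC : ∀ x ∈ s, |h' x| ≤ C)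
    {a b : ℝ} (ha : a ∈ s) (hb : b ∈ s) : |h b - h a| ≤ C * |b - a| := by
  have := hs.norm_image_sub_le_of_norm_hasDerivWithin_le
    (fun x hx => (hd x hx).hasDerivWithinAt)
    (fun x hx => by simpa [Real.norm_eq_abs] using hC x hx) ha hb
  simpa [Real.norm_eq_abs] using this

private lemma abs_sub_le_of_mem_uIcc' {a b x : ℝ} (h : x ∈ Set.uIcc a b) :
    |x - a| ≤ |b - a| := by
  rw [Set.mem_uIcc] at h
  rcases h with ⟨h1, h2⟩ | ⟨h1, h2⟩
  · rw [abs_of_nonneg (by linarith)]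
    have := le_abs_self (b - a); linarith
  · rw [abs_of_nonpos (by linarith)]
    have := neg_abs_le (b - a); linarith

private lemma taylor_bound {h : ℝ → ℝ} (hd : Differentiable ℝ h) {a b C : ℝ}
    (hC : ∀ x ∈ Set.uIcc a b, |deriv h x - deriv h a| ≤ C) :
    |h b - h a - deriv h a * (b - a)| ≤ C * |b - a| := by
  have key := mvt_bound (h := fun x => h x - deriv h a * x)
    (h' := fun x => deriv h x - deriv h a) (convex_uIcc a b)
    (fun x _ => by
      have hlin : HasDerivAt (fun y : ℝ => deriv h a * y) (deriv h a) x := by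
        simpa using (hasDerivAt_id x).const_mul (deriv h a)
      exact (hd x).hasDerivAt.sub hlin)
    hC Set.left_mem_uIcc Set.right_mem_uIcc
  have heq : h b - deriv h a * b - (h a - deriv h a * a)
      = h b - h a - deriv h a * (b - a) := by ring
  rwa [heq] at key

private lemma hasDerivAt_of_eventually_bound {F : ℝ → ℝ} {c x₀ : ℝ}
    (h : ∀ ε > (0:ℝ), ∀ᶠ q in nhds x₀, |F q - F x₀ - c * (q - x₀)| ≤ ε * |q - x₀|) :
    HasDerivAt F c x₀ := by
  rw [hasDerivAt_iff_isLittleO, Asymptotics.isLittleO_iff]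
  intro ε hε
  filter_upwards [h ε hε] with q hq
  have : (q - x₀) • c = c * (q - x₀) := by simp [smul_eq_mul]; ring
  rw [Real.norm_eq_abs, Real.norm_eq_abs, this]
  exact hq

private lemma hasDerivAt_of_sq_bound {F : ℝ → ℝ} {c x₀ C : ℝ} (hC : 0 ≤ C)
    (h : ∀ᶠ q in nhds x₀, |F q - F x₀ - c * (q - x₀)| ≤ C * |q - x₀| ^ 2) :
    HasDerivAt F c x₀ := by
  apply hasDerivAt_of_eventually_bound
  intro ε hε
  have hball : ∀ᶠ q in nhds x₀, |q - x₀| < ε / (C + 1) := by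
    filter_upwards [Metric.ball_mem_nhds x₀ (show (0:ℝ) < ε / (C+1) by positivity)] with q hq
    simpa [Real.dist_eq] using hq
  filter_upwards [h, hball] with q h1 h2
  have hC1 : (0:ℝ) < C + 1 := by linarith
  have hkey : C * |q - x₀| ≤ ε := by
    have h3 : C * |q - x₀| ≤ C * (ε / (C + 1)) :=
      mul_le_mul_of_nonneg_left h2.le hC
    have h4 : C * (ε / (C + 1)) ≤ ε := by
      rw [← mul_div_assoc, div_le_iff₀ hC1]; nlinarith
    linarith
  calc |F q - F x₀ - c * (q - x₀)| ≤ C * |q - x₀| ^ 2 := h1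
    _ = (C * |q - x₀|) * |q - x₀| := by ring
    _ ≤ ε * |q - x₀| := mul_le_mul_of_nonneg_right hkey (abs_nonneg _)

set_option maxHeartbeats 2000000 in
theorem switch_function_derivative_factorization
    (f g : ℝ → ℝ) (hf : ContDiff ℝ 2 f) (hgC : ContDiff ℝ 1 g)
    (hg : ∀ q ∈ Ioo (0:ℝ) 1, 0 < g q)
    (P : ℝ → ℝ → ℝ) (hinit : ∀ q, P 0 q = q)
    (hode : ∀ q ∈ Ioo (0:ℝ) 1, ∀ t, HasDerivAt (fun s => P s q) (f (P t q)) t)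
    (hstay : ∀ q ∈ Ioo (0:ℝ) 1, ∀ t, P t q ∈ Ioo (0:ℝ) 1)
    (T : ℝ) (hT : 0 < T) (w A : ℝ → ℝ)
    (hw : ∀ q, w q = -g q * (1 - P T q) *
      Real.exp (∫ s in (0:ℝ)..T, deriv f (P s q)))
    (hA : ∀ q, A q = deriv g q / g q
      - Real.exp (∫ s in (0:ℝ)..T, deriv f (P s q)) / (1 - P T q)
      + ∫ s in (0:ℝ)..T,
          iteratedDeriv 2 f (P s q) * Real.exp (∫ σ in (0:ℝ)..s, deriv f (P σ q)))
    (p0 : ℝ) (hp0 : p0 ∈ Ioo (0:ℝ) 1) :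
    HasDerivAt w (w p0 * A p0) p0 ∧ w p0 < 0 ∧
      (0 < w p0 * A p0 ↔ A p0 < 0) := by
  -- unpack smoothness
  have h2eq : (2 : WithTop ℕ∞) = 1 + 1 := by norm_num
  rw [h2eq] at hf
  obtain ⟨hfd, -, hf1⟩ := contDiff_succ_iff_deriv.mp hf
  have hf'c : Continuous (deriv f) := hf1.continuous
  obtain ⟨hf'd, hf''c⟩ := contDiff_one_iff_deriv.mp hf1
  obtain ⟨hgd, -⟩ := contDiff_one_iff_deriv.mp hgC
  have hit : iteratedDeriv 2 f = deriv (deriv f) := by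
    rw [show (2:ℕ) = 1 + 1 from rfl, iteratedDeriv_succ, iteratedDeriv_one]
  -- bounds on [0,1]
  obtain ⟨L0, hL0⟩ := (isCompact_Icc (a := (0:ℝ)) (b := 1)).exists_bound_of_continuousOn
    hf'c.continuousOn
  obtain ⟨M0, hM0⟩ := (isCompact_Icc (a := (0:ℝ)) (b := 1)).exists_bound_of_continuousOn
    hf''c.continuousOn
  set L : ℝ := max L0 0 with hLdef
  set M : ℝ := max M0 0 with hMdef
  have hLnn : 0 ≤ L := le_max_right _ _
  have hMnn : 0 ≤ M := le_max_right _ _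
  have hL : ∀ x ∈ Icc (0:ℝ) 1, |deriv f x| ≤ L := fun x hx => by
    have := hL0 x hx; rw [Real.norm_eq_abs] at this
    exact this.trans (le_max_left _ _)
  have hM : ∀ x ∈ Icc (0:ℝ) 1, |deriv (deriv f) x| ≤ M := fun x hx => by
    have := hM0 x hx; rw [Real.norm_eq_abs] at this
    exact this.trans (le_max_left _ _)
  have hIcc : ∀ q ∈ Ioo (0:ℝ) 1, ∀ t, P t q ∈ Icc (0:ℝ) 1 :=
    fun q hq t => Ioo_subset_Icc_self (hstay q hq t)
  -- Lipschitz bounds from MVT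
  have hfLip : ∀ a ∈ Icc (0:ℝ) 1, ∀ b ∈ Icc (0:ℝ) 1, |f b - f a| ≤ L * |b - a| :=
    fun a ha b hb => mvt_bound (convex_Icc 0 1) (fun x _ => (hfd x).hasDerivAt) hL ha hb
  have hf'Lip : ∀ a ∈ Icc (0:ℝ) 1, ∀ b ∈ Icc (0:ℝ) 1,
      |deriv f b - deriv f a| ≤ M * |b - a| :=
    fun a ha b hb => mvt_bound (convex_Icc 0 1) (fun x _ => (hf'd x).hasDerivAt) hM ha hb
  -- continuity in time
  have hPcont : ∀ q ∈ Ioo (0:ℝ) 1, Continuous (fun s => P s q) :=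
    fun q hq => continuous_iff_continuousAt.mpr fun t => (hode q hq t).continuousAt
  have hIntCont : ∀ q ∈ Ioo (0:ℝ) 1, Continuous (fun s => deriv f (P s q)) :=
    fun q hq => hf'c.comp (hPcont q hq)
  -- the resolvent
  set Iψ : ℝ → ℝ := fun t => ∫ s in (0:ℝ)..t, deriv f (P s p0) with hIψdef
  have hIψd : ∀ t, HasDerivAt Iψ (deriv f (P t p0)) t :=
    fun t => ((hIntCont p0 hp0).integral_hasStrictDerivAt 0 t).hasDerivAt
  have hIψcont : Continuous Iψ :=
    continuous_iff_continuousAt.mpr fun t => (hIψd t).continuousAt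
  have hIψ0 : Iψ 0 = 0 := intervalIntegral.integral_same
  have hIψbound : ∀ t ∈ Icc (0:ℝ) T, |Iψ t| ≤ L * T := by
    intro t ht
    have h1 : ‖∫ s in (0:ℝ)..t, deriv f (P s p0)‖ ≤ L * |t - 0| :=
      intervalIntegral.norm_integral_le_of_norm_le_const
        (fun x _ => by simpa [Real.norm_eq_abs] using hL _ (hIcc p0 hp0 x))
    rw [Real.norm_eq_abs, sub_zero, abs_of_nonneg ht.1] at h1
    exact h1.trans (mul_le_mul_of_nonneg_left ht.2 hLnn)
  set B : ℝ := Real.exp (L * T) with hBdef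
  have hBpos : 0 < B := Real.exp_pos _
  set E : ℝ → ℝ := fun t => Real.exp (Iψ t) with hEdef
  have hEcont : Continuous E := Real.continuous_exp.comp hIψcont
  have hEpos : ∀ t, 0 < E t := fun t => Real.exp_pos _
  have hEb : ∀ t ∈ Icc (0:ℝ) T, E t ≤ B :=
    fun t ht => Real.exp_le_exp.mpr ((le_abs_self _).trans (hIψbound t ht))
  have hEinvb : ∀ t ∈ Icc (0:ℝ) T, Real.exp (-(Iψ t)) ≤ B :=
    fun t ht => Real.exp_le_exp.mpr ((neg_le_abs _).trans (hIψbound t ht))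
  -- Gronwall estimate
  have key1 : ∀ q ∈ Ioo (0:ℝ) 1, ∀ t ∈ Icc (0:ℝ) T, |P t q - P t p0| ≤ |q - p0| * B := by
    intro q hq t ht
    have hgr := norm_le_gronwallBound_of_norm_deriv_right_le
      (f := fun s => P s q - P s p0) (f' := fun s => f (P s q) - f (P s p0))
      (δ := |q - p0|) (K := L) (ε := 0) (a := 0) (b := T)
      (((hPcont q hq).sub (hPcont p0 hp0)).continuousOn)
      (fun x _ => ((hode q hq x).sub (hode p0 hp0 x)).hasDerivWithinAt)
      (by simp [hinit, Real.norm_eq_abs])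
      (fun x _ => by
        have := hfLip _ (hIcc p0 hp0 x) _ (hIcc q hq x)
        rw [Real.norm_eq_abs, Real.norm_eq_abs, add_zero]
        exact this)
      t ht
    rw [gronwallBound_ε0, Real.norm_eq_abs] at hgr
    have hle : Real.exp (L * (t - 0)) ≤ B := by
      rw [hBdef]
      exact Real.exp_le_exp.mpr (by rw [sub_zero]; exact mul_le_mul_of_nonneg_left ht.2 hLnn)
    exact hgr.trans (mul_le_mul_of_nonneg_left hle (abs_nonneg _))
  -- Taylor bound for f
  have hftay : ∀ a ∈ Icc (0:ℝ) 1, ∀ b ∈ Icc (0:ℝ) 1,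
      |f b - f a - deriv f a * (b - a)| ≤ (M * |b - a|) * |b - a| := by
    intro a ha b hb
    apply taylor_bound hfd
    intro x hx
    have hx1 : x ∈ Icc (0:ℝ) 1 := (Set.ordConnected_Icc.uIcc_subset ha hb) hx
    have h1 := hf'Lip a ha x hx1
    have h2 := abs_sub_le_of_mem_uIcc' hx
    nlinarith [abs_nonneg (x - a)]
  -- variational estimate
  set C₂ : ℝ := B ^ 4 * (M * T) with hC2def
  have hC2nn : 0 ≤ C₂ := by positivity
  have key2 : ∀ q ∈ Ioo (0:ℝ) 1, ∀ t ∈ Icc (0:ℝ) T,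
      |P t q - P t p0 - E t * (q - p0)| ≤ C₂ * |q - p0| ^ 2 := by
    intro q hq t ht
    set y : ℝ → ℝ := fun s => (P s q - P s p0) * Real.exp (-(Iψ s)) with hydef
    have hyd : ∀ s, HasDerivAt y
        ((f (P s q) - f (P s p0) - deriv f (P s p0) * (P s q - P s p0))
          * Real.exp (-(Iψ s))) s := by
      intro s
      have h1 : HasDerivAt (fun u => P u q - P u p0) (f (P s q) - f (P s p0)) s :=
        (hode q hq s).sub (hode p0 hp0 s)
      have h2 : HasDerivAt (fun u => Real.exp (-(Iψ u)))
          (Real.exp (-(Iψ s)) * -(deriv f (P s p0))) s := ((hIψd s).neg).exp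
      have : HasDerivAt (fun u => (P u q - P u p0) * Real.exp (-(Iψ u)))
          ((f (P s q) - f (P s p0)) * Real.exp (-(Iψ s))
            + (P s q - P s p0) * (Real.exp (-(Iψ s)) * -(deriv f (P s p0)))) s := h1.mul h2
      convert this using 1
      ring
    have hy'b : ∀ s ∈ Icc (0:ℝ) T,
        |(f (P s q) - f (P s p0) - deriv f (P s p0) * (P s q - P s p0))
          * Real.exp (-(Iψ s))| ≤ M * B ^ 3 * |q - p0| ^ 2 := by
      intro s hs
      have hz := key1 q hq s hs
      have htay := hftay _ (hIcc p0 hp0 s) _ (hIcc q hq s)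
      have hexp := hEinvb s hs
      have hexppos : (0:ℝ) < Real.exp (-(Iψ s)) := Real.exp_pos _
      rw [abs_mul, Real.abs_exp]
      have step1 : |f (P s q) - f (P s p0) - deriv f (P s p0) * (P s q - P s p0)|
          * Real.exp (-(Iψ s))
          ≤ (M * |P s q - P s p0| * |P s q - P s p0|) * B :=
        mul_le_mul htay hexp hexppos.le (by positivity)
      refine step1.trans ?_
      have h2 : |P s q - P s p0| * |P s q - P s p0| ≤ (|q - p0| * B) * (|q - p0| * B) :=
        mul_le_mul hz hz (abs_nonneg _) (by positivity)
      calc M * |P s q - P s p0| * |P s q - P s p0| * B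
          = (M * B) * (|P s q - P s p0| * |P s q - P s p0|) := by ring
        _ ≤ (M * B) * ((|q - p0| * B) * (|q - p0| * B)) :=
            mul_le_mul_of_nonneg_left h2 (by positivity)
        _ = M * B ^ 3 * |q - p0| ^ 2 := by ring
    have hy0 : y 0 = q - p0 := by
      simp [hydef, hinit, hIψ0]
    have hymvt := mvt_bound (convex_Icc (0:ℝ) T) (fun s _ => hyd s) hy'b
      (Set.left_mem_Icc.mpr hT.le) ht
    rw [hy0] at hymvt
    have hyt : |y t - (q - p0)| ≤ M * B ^ 3 * |q - p0| ^ 2 * T := by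
      refine hymvt.trans ?_
      rw [sub_zero, abs_of_nonneg ht.1]
      exact mul_le_mul_of_nonneg_left ht.2 (by positivity)
    have hEz : P t q - P t p0 = E t * y t := by
      have hone : E t * Real.exp (-(Iψ t)) = 1 := by
        rw [hEdef]; rw [← Real.exp_add]; simp
      calc P t q - P t p0 = (P t q - P t p0) * (E t * Real.exp (-(Iψ t))) := by
            rw [hone, mul_one]
        _ = E t * ((P t q - P t p0) * Real.exp (-(Iψ t))) := by ring
        _ = E t * y t := rfl
    have hsplit : P t q - P t p0 - E t * (q - p0) = E t * (y t - (q - p0)) := by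
      rw [hEz]; ring
    rw [hsplit, abs_mul, abs_of_pos (hEpos t)]
    calc E t * |y t - (q - p0)| ≤ B * (M * B ^ 3 * |q - p0| ^ 2 * T) :=
          mul_le_mul (hEb t ht) hyt (abs_nonneg _) hBpos.le
      _ = C₂ * |q - p0| ^ 2 := by rw [hC2def]; ring
  -- derivative of the flow at time T
  have hTmem : T ∈ Icc (0:ℝ) T := Set.right_mem_Icc.mpr hT.le
  have hPTd : HasDerivAt (fun q => P T q) (E T) p0 := by
    apply hasDerivAt_of_sq_bound hC2nn
    filter_upwards [isOpen_Ioo.mem_nhds hp0] with q hq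
    exact key2 q hq T hTmem
  -- derivative of the integral term
  set J : ℝ := ∫ s in (0:ℝ)..T, deriv (deriv f) (P s p0) * E s with hJdef
  have hId : HasDerivAt (fun q => ∫ s in (0:ℝ)..T, deriv f (P s q)) J p0 := by
    apply hasDerivAt_of_eventually_bound
    intro ε hε
    set ε' : ℝ := ε / (2 * T * B) with hε'def
    have hε'pos : 0 < ε' := by positivity
    have huc := (isCompact_Icc (a := (0:ℝ)) (b := 1)).uniformContinuousOn_of_continuous
      hf''c.continuousOn
    rw [Metric.uniformContinuousOn_iff] at huc
    obtain ⟨δ₁, hδ₁pos, hδ₁⟩ := huc ε' hε'pos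
    set r : ℝ := min (δ₁ / (B + 1)) ((ε / 2) / (T * M * C₂ + 1)) with hrdef
    have hrpos : 0 < r := lt_min (by positivity) (by positivity)
    filter_upwards [isOpen_Ioo.mem_nhds hp0, Metric.ball_mem_nhds p0 hrpos] with q hq hq2
    have hqd : |q - p0| < r := by simpa [Real.dist_eq] using hq2
    have hqd1 : |q - p0| < δ₁ / (B + 1) := lt_of_lt_of_le hqd (min_le_left _ _)
    have hqd2 : |q - p0| < (ε / 2) / (T * M * C₂ + 1) := lt_of_lt_of_le hqd (min_le_right _ _)
    -- pointwise bound on the integrand difference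
    have hpt : ∀ s ∈ Set.uIoc (0:ℝ) T,
        ‖deriv f (P s q) - deriv f (P s p0)
          - deriv (deriv f) (P s p0) * E s * (q - p0)‖
        ≤ ε' * B * |q - p0| + M * (C₂ * |q - p0| ^ 2) := by
      intro s hs
      have hsIcc : s ∈ Icc (0:ℝ) T := by
        rw [Set.uIoc_of_le hT.le] at hs
        exact ⟨hs.1.le, hs.2⟩
      have hz := key1 q hq s hsIcc
      have hz2 := key2 q hq s hsIcc
      have htay : |deriv f (P s q) - deriv f (P s p0)
          - deriv (deriv f) (P s p0) * (P s q - P s p0)| ≤ ε' * (|q - p0| * B) := by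
        have h0 := taylor_bound (a := P s p0) (b := P s q) hf'd (C := ε') ?_
        · exact h0.trans (mul_le_mul_of_nonneg_left hz hε'pos.le)
        · intro x hx
          have hx1 : x ∈ Icc (0:ℝ) 1 :=
            (Set.ordConnected_Icc.uIcc_subset (hIcc p0 hp0 s) (hIcc q hq s)) hx
          have hd1 := abs_sub_le_of_mem_uIcc' hx
          have hdist : dist x (P s p0) < δ₁ := by
            rw [Real.dist_eq]
            have hB1 : |q - p0| * B ≤ |q - p0| * (B + 1) :=
              mul_le_mul_of_nonneg_left (by linarith) (abs_nonneg _)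
            have hlt : |q - p0| * (B + 1) < δ₁ :=
              (lt_div_iff₀ (by linarith : (0:ℝ) < B + 1)).mp hqd1
            linarith [hd1.trans hz]
          have := hδ₁ x hx1 (P s p0) (hIcc p0 hp0 s) hdist
          rw [Real.dist_eq] at this
          exact this.le
      have hsecond : |deriv (deriv f) (P s p0) * (P s q - P s p0 - E s * (q - p0))|
          ≤ M * (C₂ * |q - p0| ^ 2) := by
        rw [abs_mul]
        exact mul_le_mul (hM _ (hIcc p0 hp0 s)) hz2 (abs_nonneg _) hMnn
      have hdecomp : deriv f (P s q) - deriv f (P s p0)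
          - deriv (deriv f) (P s p0) * E s * (q - p0)
          = (deriv f (P s q) - deriv f (P s p0)
              - deriv (deriv f) (P s p0) * (P s q - P s p0))
            + deriv (deriv f) (P s p0) * (P s q - P s p0 - E s * (q - p0)) := by ring
      rw [Real.norm_eq_abs, hdecomp]
      calc |_ + _| ≤ _ := abs_add_le _ _
        _ ≤ ε' * (|q - p0| * B) + M * (C₂ * |q - p0| ^ 2) := by
            exact add_le_add htay hsecond
        _ = ε' * B * |q - p0| + M * (C₂ * |q - p0| ^ 2) := by ring
    -- rewrite the difference as one integral
    have hcont1 : Continuous fun s => deriv f (P s q) := hIntCont q hq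
    have hcont2 : Continuous fun s => deriv f (P s p0) := hIntCont p0 hp0
    have hcont3 : Continuous fun s => deriv (deriv f) (P s p0) * E s :=
      (hf''c.comp (hPcont p0 hp0)).mul hEcont
    have hsplit : (∫ s in (0:ℝ)..T, deriv f (P s q))
        - (∫ s in (0:ℝ)..T, deriv f (P s p0)) - J * (q - p0)
        = ∫ s in (0:ℝ)..T, (deriv f (P s q) - deriv f (P s p0)
            - deriv (deriv f) (P s p0) * E s * (q - p0)) := by
      rw [hJdef, ← intervalIntegral.integral_mul_const,
        ← intervalIntegral.integral_sub (hcont1.intervalIntegrable 0 T)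
          (hcont2.intervalIntegrable 0 T),
        ← intervalIntegral.integral_sub (show IntervalIntegrable (fun s => deriv f (P s q) - deriv f (P s p0)) MeasureTheory.volume 0 T from (hcont1.sub hcont2).intervalIntegrable 0 T)
          (show IntervalIntegrable (fun s => (deriv (deriv f) (P s p0) * E s) * (q - p0)) MeasureTheory.volume 0 T from (hcont3.mul continuous_const).intervalIntegrable 0 T)]
    rw [hsplit]
    have hbig := intervalIntegral.norm_integral_le_of_norm_le_const hpt
    rw [Real.norm_eq_abs, sub_zero, abs_of_pos hT] at hbig
    refine hbig.trans ?_
    -- final arithmetic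
    have harith1 : ε' * B * T = ε / 2 := by
      rw [hε'def]; field_simp
    have harith2 : M * (C₂ * |q - p0| ^ 2) * T ≤ (ε / 2) * |q - p0| := by
      have h1 : T * M * C₂ * |q - p0| ≤ ε / 2 := by
        have hlt : |q - p0| * (T * M * C₂ + 1) < ε / 2 :=
          (lt_div_iff₀ (by positivity : (0:ℝ) < T * M * C₂ + 1)).mp hqd2
        nlinarith [abs_nonneg (q - p0)]
      nlinarith [abs_nonneg (q - p0), sq_abs (q - p0)]
    calc (ε' * B * |q - p0| + M * (C₂ * |q - p0| ^ 2)) * T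
        = ε' * B * T * |q - p0| + M * (C₂ * |q - p0| ^ 2) * T := by ring
      _ ≤ (ε / 2) * |q - p0| + (ε / 2) * |q - p0| := by
          rw [harith1]; exact add_le_add le_rfl harith2
      _ = ε * |q - p0| := by ring
  -- assemble the derivative of w
  have hweq : w = fun q => -g q * (1 - P T q) *
      Real.exp (∫ s in (0:ℝ)..T, deriv f (P s q)) := funext hw
  have hgderiv : HasDerivAt g (deriv g p0) p0 := (hgd p0).hasDerivAt
  have h1 : HasDerivAt (fun q => -g q) (-deriv g p0) p0 := hgderiv.neg
  have hsub : HasDerivAt (fun q => 1 - P T q) (-(E T)) p0 := hPTd.const_sub 1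
  have h3 : HasDerivAt (fun q => Real.exp (∫ s in (0:ℝ)..T, deriv f (P s q)))
      (Real.exp (∫ s in (0:ℝ)..T, deriv f (P s p0)) * J) p0 := hId.exp
  have hwd : HasDerivAt w
      ((-deriv g p0 * (1 - P T p0) + -g p0 * -(E T))
          * Real.exp (∫ s in (0:ℝ)..T, deriv f (P s p0))
        + -g p0 * (1 - P T p0)
          * (Real.exp (∫ s in (0:ℝ)..T, deriv f (P s p0)) * J)) p0 := by
    rw [hweq]
    exact (h1.mul hsub).mul h3
  -- positivity facts
  have hgpos : 0 < g p0 := hg p0 hp0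
  have hupos : 0 < 1 - P T p0 := by have := (hstay p0 hp0 T).2; linarith
  have hXpos : 0 < Real.exp (∫ s in (0:ℝ)..T, deriv f (P s p0)) := Real.exp_pos _
  have hET : E T = Real.exp (∫ s in (0:ℝ)..T, deriv f (P s p0)) := by rw [hEdef]
  have hJeq : (∫ s in (0:ℝ)..T, iteratedDeriv 2 f (P s p0)
      * Real.exp (∫ σ in (0:ℝ)..s, deriv f (P σ p0))) = J := by
    rw [hJdef]
    congr 1
    funext s
    rw [hit]
  have hwneg : w p0 < 0 := by
    rw [hw p0]
    have hprod : 0 < g p0 * (1 - P T p0)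
        * Real.exp (∫ s in (0:ℝ)..T, deriv f (P s p0)) := by positivity
    linarith [hprod]
  have hval : (-deriv g p0 * (1 - P T p0) + -g p0 * -(E T))
          * Real.exp (∫ s in (0:ℝ)..T, deriv f (P s p0))
        + -g p0 * (1 - P T p0)
          * (Real.exp (∫ s in (0:ℝ)..T, deriv f (P s p0)) * J)
      = w p0 * A p0 := by
    have alg : ∀ (G Gd u X Jv : ℝ), G ≠ 0 → u ≠ 0 →
        (-Gd * u + -G * -X) * X + -G * u * (X * Jv)
          = -G * u * X * (Gd / G - X / u + Jv) := by
      intros G Gd u X Jv hG hu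
      field_simp
      ring
    rw [hw p0, hA p0, hJeq, hET]
    exact alg (g p0) (deriv g p0) (1 - P T p0) _ J hgpos.ne' hupos.ne'
  refine ⟨hval ▸ hwd, hwneg, ?_⟩
  constructor
  · intro h
    by_contra h'
    push_neg at h'
    have := mul_nonpos_of_nonpos_of_nonneg hwneg.le h'
    linarith
  · intro h
    exact mul_pos_of_neg_of_neg hwneg h
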